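/- Let (P, ≤) be a well-founded partial order and let P = P₁ ⊔ P₂ be a partition of its domain. Then rank(P) ≤ rank(P↾P₁) ⊕ rank(P↾P₂), where ⊕ is the natural (Hessenberg) sum of ordinals. -/

import Mathlib

/-- Natural (Hessenberg) addition of ordinals, as defined in the older Mathlib
(`Mathlib/SetTheory/Ordinal/NaturalOps.lean`), which no longer contains it. -/
noncomputable def Ordinal.nadd (a b : Ordinal) : Ordinal :=
  max (⨆ x : Set.Iio a, Order.succ (Ordinal.nadd x.1 b))
    (⨆ x : Set.Iio b, Order.succ (Ordinal.nadd a x.1))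
termination_by (a, b)
decreasing_by
  · exact Prod.Lex.left _ _ x.2
  · exact Prod.Lex.right _ x.2

namespace NaturalOps

infixl:65 " ♯ " => Ordinal.nadd

end NaturalOps

open NaturalOps

universe u

/-- The ordinal rank of an element of a well-founded partial order:
`rank p = sup { rank p' + 1 | p' < p }`. -/
noncomputable def elRank {P : Type u} [PartialOrder P] [WellFoundedLT P] (p : P) :
    Ordinal.{u} :=
  IsWellFounded.rank (α := P) (· < ·) p

/-- The ordinal rank of a well-founded partial order:
`rank P = sup { rank p + 1 | p ∈ P }` (with `sup ∅ = 0`). -/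
noncomputable def ordRank (P : Type u) [PartialOrder P] [WellFoundedLT P] : Ordinal.{u} :=
  ⨆ p : P, elRank p + 1

namespace Ordinal

theorem nadd_lt_nadd_right {a a' : Ordinal.{u}} (h : a < a') (b : Ordinal.{u}) : (a ♯ b : Ordinal.{u}) < a' ♯ b := by
  rw [Ordinal.nadd.eq_1 a' b]
  refine lt_of_lt_of_le (Order.lt_succ _) (le_max_of_le_left ?_)
  exact le_ciSup (f := fun x : Set.Iio a' => Order.succ (Ordinal.nadd x.1 b))
    Ordinal.bddAbove_of_small ⟨a, h⟩

theorem nadd_lt_nadd_left {b b' : Ordinal.{u}} (h : b < b') (a : Ordinal.{u}) : (a ♯ b : Ordinal.{u}) < a ♯ b' := by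
  rw [Ordinal.nadd.eq_1 a b']
  refine lt_of_lt_of_le (Order.lt_succ _) (le_max_of_le_right ?_)
  exact le_ciSup (f := fun x : Set.Iio b' => Order.succ (Ordinal.nadd a x.1))
    Ordinal.bddAbove_of_small ⟨b, h⟩

theorem nadd_le_nadd_right {a a' : Ordinal.{u}} (h : a ≤ a') (b : Ordinal.{u}) : (a ♯ b : Ordinal.{u}) ≤ a' ♯ b := by
  rcases h.lt_or_eq with h | h
  · exact (nadd_lt_nadd_right h b).le
  · rw [h]

theorem nadd_le_nadd_left {b b' : Ordinal.{u}} (h : b ≤ b') (a : Ordinal.{u}) : (a ♯ b : Ordinal.{u}) ≤ a ♯ b' := by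
  rcases h.lt_or_eq with h | h
  · exact (nadd_lt_nadd_left h a).le
  · rw [h]

theorem nadd_le_nadd {a b c d : Ordinal.{u}} (h₁ : a ≤ b) (h₂ : c ≤ d) : (a ♯ c : Ordinal.{u}) ≤ b ♯ d :=
  (nadd_le_nadd_right h₁ c).trans (nadd_le_nadd_left h₂ b)

theorem succ_nadd (a b : Ordinal.{u}) : Order.succ a ♯ b = Order.succ (a ♯ b : Ordinal.{u}) := by
  induction b using Ordinal.induction with
  | _ b ih =>
  apply le_antisymm
  · rw [Ordinal.nadd.eq_1 (Order.succ a) b]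
    refine max_le (ciSup_le' fun x => ?_) (ciSup_le' fun y => ?_)
    · exact Order.succ_le_succ (nadd_le_nadd_right (Order.lt_succ_iff.mp x.2) b)
    · rw [ih y.1 y.2]
      exact Order.succ_le_succ (Order.succ_le_of_lt (nadd_lt_nadd_left y.2 a))
  · exact Order.succ_le_of_lt (nadd_lt_nadd_right (Order.lt_succ a) b)

theorem nadd_succ (a b : Ordinal.{u}) : a ♯ Order.succ b = Order.succ (a ♯ b : Ordinal.{u}) := by
  induction a using Ordinal.induction with
  | _ a ih =>
  apply le_antisymm
  · rw [Ordinal.nadd.eq_1 a (Order.succ b)]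
    refine max_le (ciSup_le' fun x => ?_) (ciSup_le' fun y => ?_)
    · rw [ih x.1 x.2]
      exact Order.succ_le_succ (Order.succ_le_of_lt (nadd_lt_nadd_right x.2 b))
    · exact Order.succ_le_succ (nadd_le_nadd_left (Order.lt_succ_iff.mp y.2) a)
  · exact Order.succ_le_of_lt (nadd_lt_nadd_left (Order.lt_succ b) a)

end Ordinal

section Aux

variable {P : Type u} [PartialOrder P] [WellFoundedLT P]

/-- Rank of `p` counting only predecessors in `S`. -/
noncomputable def relRank (S : Set P) : P → Ordinal.{u} :=
  WellFoundedLT.fix fun p ih => ⨆ q : {q // q ∈ S ∧ q < p}, Order.succ (ih q q.2.2)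

theorem relRank_eq (S : Set P) (p : P) :
    relRank S p = ⨆ q : {q // q ∈ S ∧ q < p}, Order.succ (relRank S q) :=
  WellFoundedLT.fix_eq _ p

theorem relRank_mono (S : Set P) {p p' : P} (h : p ≤ p') : relRank S p ≤ relRank S p' := by
  rw [relRank_eq S p]
  refine Ordinal.iSup_le fun q => ?_
  rw [relRank_eq S p']
  exact Ordinal.le_iSup (fun q : {q // q ∈ S ∧ q < p'} => Order.succ (relRank S q))
    ⟨q.1, q.2.1, lt_of_lt_of_le q.2.2 h⟩

theorem succ_relRank_le (S : Set P) {q p : P} (hq : q ∈ S) (h : q < p) :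
    Order.succ (relRank S q) ≤ relRank S p := by
  rw [relRank_eq S p]
  exact Ordinal.le_iSup (fun q : {q // q ∈ S ∧ q < p} => Order.succ (relRank S q)) ⟨q, hq, h⟩

theorem elRank_le_nadd (P₁ P₂ : Set P) (hcover : P₁ ∪ P₂ = Set.univ) (p : P) :
    elRank p ≤ relRank P₁ p ♯ relRank P₂ p := by
  induction p using WellFoundedLT.induction with
  | ind p ih =>
  rw [elRank, IsWellFounded.rank_eq]
  refine Ordinal.iSup_le fun q => ?_
  have hq : q.1 ∈ P₁ ∪ P₂ := by rw [hcover]; trivial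
  have hrank := ih q.1 q.2
  rcases hq with hq | hq
  · calc Order.succ (IsWellFounded.rank (α := P) (· < ·) q.1)
        ≤ Order.succ (relRank P₁ q.1 ♯ relRank P₂ q.1) := Order.succ_le_succ hrank
      _ = Order.succ (relRank P₁ q.1) ♯ relRank P₂ q.1 := (Ordinal.succ_nadd _ _).symm
      _ ≤ relRank P₁ p ♯ relRank P₂ p :=
          (Ordinal.nadd_le_nadd_right (succ_relRank_le P₁ hq q.2) _).trans
            (Ordinal.nadd_le_nadd_left (relRank_mono P₂ q.2.le) _)
  · calc Order.succ (IsWellFounded.rank (α := P) (· < ·) q.1)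
        ≤ Order.succ (relRank P₁ q.1 ♯ relRank P₂ q.1) := Order.succ_le_succ hrank
      _ = relRank P₁ q.1 ♯ Order.succ (relRank P₂ q.1) := (Ordinal.nadd_succ _ _).symm
      _ ≤ relRank P₁ p ♯ relRank P₂ p :=
          (Ordinal.nadd_le_nadd_left (succ_relRank_le P₂ hq q.2) _).trans
            (Ordinal.nadd_le_nadd_right (relRank_mono P₁ q.2.le) _)

theorem relRank_le_elRank (S : Set P) (p : P) (hp : p ∈ S) :
    relRank S p ≤ elRank (⟨p, hp⟩ : S) := by
  induction p using WellFoundedLT.induction with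
  | ind p ih =>
  rw [relRank_eq]
  refine Ordinal.iSup_le fun q => ?_
  have h1 : relRank S q.1 ≤ elRank (⟨q.1, q.2.1⟩ : S) := ih q.1 q.2.2 q.2.1
  have h2 : elRank (⟨q.1, q.2.1⟩ : S) < elRank (⟨p, hp⟩ : S) :=
    IsWellFounded.rank_lt_of_rel (r := ((· < ·) : S → S → Prop))
      (Subtype.mk_lt_mk.mpr q.2.2)
  exact (Order.succ_le_succ h1).trans (Order.succ_le_of_lt h2)

theorem relRank_le_ordRank (S : Set P) (p : P) : relRank S p ≤ ordRank S := by
  rw [relRank_eq]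
  refine Ordinal.iSup_le fun q => ?_
  have h1 : Order.succ (relRank S q.1) ≤ Order.succ (elRank (⟨q.1, q.2.1⟩ : S)) :=
    Order.succ_le_succ (relRank_le_elRank S q.1 q.2.1)
  refine h1.trans ?_
  have := Ordinal.le_iSup (fun x : S => elRank x + 1) ⟨q.1, q.2.1⟩
  rwa [Ordinal.add_one_eq_succ] at this

end Aux

/-- If a well-founded partial order `P` is partitioned into `P₁ ⊔ P₂`, then
`rank P ≤ rank (P↾P₁) ♯ rank (P↾P₂)`, where `♯` is the natural (Hessenberg) sum. -/
theorem rank_le_nadd_of_partition {P : Type u} [PartialOrder P] [WellFoundedLT P]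
    (P₁ P₂ : Set P) (hdisj : Disjoint P₁ P₂) (hcover : P₁ ∪ P₂ = Set.univ) :
    ordRank P ≤ ordRank ↥P₁ ♯ ordRank ↥P₂ := by
  refine Ordinal.iSup_le fun p => ?_
  have hp : p ∈ P₁ ∪ P₂ := by rw [hcover]; trivial
  have key := elRank_le_nadd P₁ P₂ hcover p
  rw [Ordinal.add_one_eq_succ]
  rcases hp with hp | hp
  · calc Order.succ (elRank p)
        ≤ Order.succ (relRank P₁ p ♯ relRank P₂ p) := Order.succ_le_succ key
      _ = Order.succ (relRank P₁ p) ♯ relRank P₂ p := (Ordinal.succ_nadd _ _).symm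
      _ ≤ ordRank ↥P₁ ♯ ordRank ↥P₂ := by
          refine Ordinal.nadd_le_nadd ?_ (relRank_le_ordRank P₂ p)
          have h1 : Order.succ (relRank P₁ p) ≤ Order.succ (elRank (⟨p, hp⟩ : P₁)) :=
            Order.succ_le_succ (relRank_le_elRank P₁ p hp)
          refine h1.trans ?_
          have := Ordinal.le_iSup (fun x : P₁ => elRank x + 1) ⟨p, hp⟩
          rwa [Ordinal.add_one_eq_succ] at this
  · calc Order.succ (elRank p)
        ≤ Order.succ (relRank P₁ p ♯ relRank P₂ p) := Order.succ_le_succ key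
      _ = relRank P₁ p ♯ Order.succ (relRank P₂ p) := (Ordinal.nadd_succ _ _).symm
      _ ≤ ordRank ↥P₁ ♯ ordRank ↥P₂ := by
          refine Ordinal.nadd_le_nadd (relRank_le_ordRank P₁ p) ?_
          have h1 : Order.succ (relRank P₂ p) ≤ Order.succ (elRank (⟨p, hp⟩ : P₂)) :=
            Order.succ_le_succ (relRank_le_elRank P₂ p hp)
          refine h1.trans ?_
          have := Ordinal.le_iSup (fun x : P₂ => elRank x + 1) ⟨p, hp⟩
          rwa [Ordinal.add_one_eq_succ] at this
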